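/- If a standard interference function f : ℝ₊^K → ℝ₊₊ is restricted to the open positive orthant ℝ₊₊^K, then this restriction is continuous on ℝ₊₊^K. -/
import Mathlib


/-- `f` is a standard interference function on `ℝ₊^K`. -/
def IsStdIF {K : ℕ} (f : (Fin K → ℝ) → ℝ) : Prop :=
  (∀ p : Fin K → ℝ, (∀ i, 0 ≤ p i) → 0 < f p) ∧
  (∀ p q : Fin K → ℝ, (∀ i, 0 ≤ q i) → (∀ i, q i ≤ p i) → f q ≤ f p) ∧
  (∀ p : Fin K → ℝ, (∀ i, 0 ≤ p i) → ∀ α : ℝ, 1 < α → f (α • p) < α * f p)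

theorem stmt13 {K : ℕ} (f : (Fin K → ℝ) → ℝ) (hf : IsStdIF f) :
    ContinuousOn f {p : Fin K → ℝ | ∀ i, 0 < p i} := by
  obtain ⟨hpos, hmono, hscale⟩ := hf
  intro p hp
  apply ContinuousAt.continuousWithinAt
  have hfp : 0 < f p := hpos p (fun i => (hp i).le)
  rw [ContinuousAt, Metric.tendsto_nhds]
  intro ε hε
  obtain ⟨α, hα, hkey⟩ : ∃ α : ℝ, 1 < α ∧ (α - 1) * f p = ε / 2 := by
    refine ⟨1 + ε / (2 * f p), ?_, ?_⟩
    · have : 0 < ε / (2 * f p) := by positivity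
      linarith
    · field_simp
      ring
  have hα0 : 0 < α := by linarith
  set U : Set (Fin K → ℝ) := {q | ∀ i, q i ∈ Set.Ioo (p i / α) (α * p i)} with hUdef
  have hUopen : IsOpen U := by
    have : U = Set.pi Set.univ (fun i => Set.Ioo (p i / α) (α * p i)) := by
      ext q; simp [hUdef, Set.mem_pi]
    rw [this]
    exact isOpen_set_pi Set.finite_univ (fun i _ => isOpen_Ioo)
  have hpU : p ∈ U := by
    intro i
    exact ⟨div_lt_self (hp i) hα, (lt_mul_iff_one_lt_left (hp i)).2 hα⟩
  filter_upwards [hUopen.mem_nhds hpU] with q hq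
  have hq0 : ∀ i, 0 ≤ q i := fun i =>
    le_of_lt (lt_trans (div_pos (hp i) hα0) (hq i).1)
  have hfq : 0 < f q := hpos q hq0
  -- upper bound
  have h1 : f q ≤ f (α • p) := by
    apply hmono _ q hq0
    intro i
    simpa [Pi.smul_apply, smul_eq_mul] using (hq i).2.le
  have h2 : f (α • p) < α * f p := hscale p (fun i => (hp i).le) α hα
  -- lower bound
  have hinv0 : ∀ i, 0 ≤ (α⁻¹ • p) i := by
    intro i
    simp only [Pi.smul_apply, smul_eq_mul]
    exact mul_nonneg (inv_nonneg.2 hα0.le) (hp i).le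
  have h3 : f (α⁻¹ • p) ≤ f q := by
    apply hmono q _ hinv0
    intro i
    have := (hq i).1.le
    simpa [Pi.smul_apply, smul_eq_mul, div_eq_inv_mul] using this
  have h4 : f p < α * f (α⁻¹ • p) := by
    have := hscale (α⁻¹ • p) hinv0 α hα
    rwa [smul_smul, mul_inv_cancel₀ (ne_of_gt hα0), one_smul] at this
  have hub : f q < α * f p := lt_of_le_of_lt h1 h2
  have hlb : f p < α * f q :=
    lt_of_lt_of_le h4 (mul_le_mul_of_nonneg_left h3 hα0.le)
  rw [Real.dist_eq, abs_sub_lt_iff]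
  constructor
  · nlinarith
  · nlinarith
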